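/- The backward transition matrix Q̄_t of the discrete diffusion time reversal, defined by [Q̄_t]_{ij} = ([p_{T−t}]_i/[p_{T−t}]_j)[Q_{T−t}]_{ji} for i ≠ j and [Q̄_t]_{ii} = −Σ_{s≠i}[Q_{T−t}]_{is}([p_{T−t}]_s/[p_{T−t}]_i), has columns summing to zero; moreover p_t^← := p_{T−t} solves dp_t^←/dt = Q̄_t p_t^← whenever p_t solves the forward equation dp_t/dt = Q_t p_t and all entries of p_t are positive. -/

import Mathlib

/-!
STATEMENT 13: Discrete diffusion time reversal. Let Q_t be a rate-matrix family
(off-diagonal entries nonnegative, columns summing to zero) and p_t a positive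
probability vector solving dp_t/dt = Q_t p_t on [0,T]. The backward transition matrix
Q̄_t, [Q̄_t]_{ij} = ([p_{T−t}]_i/[p_{T−t}]_j)[Q_{T−t}]_{ji} (i ≠ j),
[Q̄_t]_{ii} = −Σ_{s≠i}[Q_{T−t}]_{is}([p_{T−t}]_s/[p_{T−t}]_i),
has columns summing to zero, and p_t^← := p_{T−t} solves dp_t^←/dt = Q̄_t p_t^←.
-/

open Matrix

theorem discrete_diffusion_time_reversal
    (N : ℕ) (T : ℝ) (hT : 0 < T)
    (Q : ℝ → Matrix (Fin N) (Fin N) ℝ)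
    (p : ℝ → Fin N → ℝ)
    (hrate_offdiag : ∀ t i j, i ≠ j → 0 ≤ Q t i j)
    (hrate_cols : ∀ t j, ∑ i, Q t i j = 0)
    (hpos : ∀ t ∈ Set.Icc (0:ℝ) T, ∀ i, 0 < p t i)
    (hprob : ∀ t ∈ Set.Icc (0:ℝ) T, ∑ i, p t i = 1)
    (hforward : ∀ t ∈ Set.Icc (0:ℝ) T, HasDerivAt p ((Q t).mulVec (p t)) t)
    (Qbar : ℝ → Matrix (Fin N) (Fin N) ℝ)
    (hQbar : ∀ t i j, Qbar t i j =
      if i = j then -∑ s ∈ Finset.univ.erase i, Q (T - t) i s * (p (T - t) s / p (T - t) i)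
      else (p (T - t) i / p (T - t) j) * Q (T - t) j i) :
    (∀ t ∈ Set.Icc (0:ℝ) T, ∀ j, ∑ i, Qbar t i j = 0) ∧
    (∀ t ∈ Set.Ioo (0:ℝ) T,
      HasDerivAt (fun s => p (T - s)) ((Qbar t).mulVec (p (T - t))) t) := by
  constructor
  · intro t ht j
    rw [← Finset.add_sum_erase _ _ (Finset.mem_univ j)]
    rw [hQbar t j j, if_pos rfl]
    have : ∑ i ∈ Finset.univ.erase j, Qbar t i j
        = ∑ s ∈ Finset.univ.erase j, Q (T - t) j s * (p (T - t) s / p (T - t) j) := by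
      apply Finset.sum_congr rfl
      intro i hi
      have hij : i ≠ j := Finset.ne_of_mem_erase hi
      rw [hQbar t i j, if_neg hij]
      ring
    rw [this]; ring
  · intro t ht
    have htT : T - t ∈ Set.Icc (0:ℝ) T := ⟨by linarith [ht.2], by linarith [ht.1]⟩
    have hq : ∀ i, 0 < p (T - t) i := hpos _ htT
    have hinner : HasDerivAt (fun s : ℝ => T - s) (-1) t := by
      simpa using (hasDerivAt_id t).const_sub T
    have hcomp := (hforward (T - t) htT).scomp t hinner
    refine hcomp.congr_deriv (Eq.symm ?_)
    funext i
    have h1 : ((Qbar t).mulVec (p (T - t))) i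
        = ∑ j, Qbar t i j * p (T - t) j := rfl
    rw [h1, ← Finset.add_sum_erase _ _ (Finset.mem_univ i)]
    have hdiag : Qbar t i i = -∑ s ∈ Finset.univ.erase i, Q (T - t) i s * (p (T - t) s / p (T - t) i) := by
      rw [hQbar t i i, if_pos rfl]
    have hoff : ∑ j ∈ Finset.univ.erase i, Qbar t i j * p (T - t) j
        = ∑ j ∈ Finset.univ.erase i, p (T - t) i * Q (T - t) j i := by
      apply Finset.sum_congr rfl
      intro j hj
      have hij : i ≠ j := (Finset.ne_of_mem_erase hj).symm
      rw [hQbar t i j, if_neg hij, div_mul_eq_mul_div, mul_comm, mul_div_assoc,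
        mul_comm, mul_assoc, div_mul_cancel₀ _ (hq j).ne']
    have hdiag2 : Qbar t i i * p (T - t) i
        = -∑ s ∈ Finset.univ.erase i, Q (T - t) i s * p (T - t) s := by
      rw [hdiag, neg_mul, Finset.sum_mul]
      congr 1
      apply Finset.sum_congr rfl
      intro s _
      rw [mul_assoc, div_mul_cancel₀ _ (hq i).ne']
    rw [hdiag2, hoff, ← Finset.mul_sum]
    have hcol : ∑ j ∈ Finset.univ.erase i, Q (T - t) j i = -Q (T - t) i i := by
      have := hrate_cols (T - t) i
      rw [← Finset.add_sum_erase _ _ (Finset.mem_univ i)] at this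
      linarith
    rw [hcol]
    have h2 : ((-1 : ℝ) • (Q (T - t)).mulVec (p (T - t))) i
        = -∑ j, Q (T - t) i j * p (T - t) j := by
      simp [Matrix.mulVec, dotProduct]
    rw [h2, ← Finset.add_sum_erase _ (fun j => Q (T - t) i j * p (T - t) j) (Finset.mem_univ i)]
    ring
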